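/- (Han–Larson dilation theorem.) Let k > n and let (f_i)_{i=1}^k be a Parseval frame for ℝⁿ (with its standard inner product). Then there exists a Parseval frame (g_i)_{i=1}^k for ℝ^{k-n} such that the sequence (f_i ⊕ g_i)_{i=1}^k is an orthonormal basis for ℝⁿ ⊕ ℝ^{k-n} ≅ ℝᵏ. -/

import Mathlib

open scoped RealInnerProductSpace

/-- Han–Larson dilation theorem: if `k > n` and `(f i)` is a Parseval
frame for `ℝⁿ`, then there is a Parseval frame `(g i)` for `ℝ^(k-n)` such that
`(f i ⊕ g i)` is an orthonormal basis of `ℝⁿ ⊕ ℝ^(k-n)`. -/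
theorem han_larson_dilation {n k : ℕ} (hkn : k > n)
    (f : Fin k → EuclideanSpace ℝ (Fin n))
    (hf : ∀ x : EuclideanSpace ℝ (Fin n), ∑ i, ⟪f i, x⟫ • f i = x) :
    ∃ g : Fin k → EuclideanSpace ℝ (Fin (k - n)),
      (∀ x : EuclideanSpace ℝ (Fin (k - n)), ∑ i, ⟪g i, x⟫ • g i = x) ∧
      ∃ b : OrthonormalBasis (Fin k) ℝ
          (WithLp 2 (EuclideanSpace ℝ (Fin n) × EuclideanSpace ℝ (Fin (k - n)))),
        ∀ i, b i = (WithLp.equiv 2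
          (EuclideanSpace ℝ (Fin n) × EuclideanSpace ℝ (Fin (k - n)))).symm (f i, g i) := by
  classical
  -- the analysis operator
  let V0 : EuclideanSpace ℝ (Fin n) →ₗ[ℝ] EuclideanSpace ℝ (Fin k) :=
    { toFun := fun x => WithLp.toLp 2 (fun i => ⟪f i, x⟫ : Fin k → ℝ)
      map_add' := by
        intro x y; ext i
        show ⟪f i, x + y⟫ = ⟪f i, x⟫ + ⟪f i, y⟫
        exact inner_add_right _ _ _
      map_smul' := by
        intro c x; ext i
        show ⟪f i, c • x⟫ = c * ⟪f i, x⟫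
        exact real_inner_smul_right _ _ _ }
  have hV0 : ∀ (x) (i : Fin k), V0 x i = ⟪f i, x⟫ := fun _ _ => rfl
  have hV : ∀ x y, ⟪V0 x, V0 y⟫ = ⟪x, y⟫ := by
    intro x y
    calc ⟪V0 x, V0 y⟫ = ∑ i, ⟪f i, x⟫ * ⟪f i, y⟫ := by
          rw [PiLp.inner_apply]
          simp [hV0, RCLike.inner_apply, conj_trivial, mul_comm]
      _ = ∑ i, ⟪f i, y⟫ * ⟪x, f i⟫ := by
          refine Finset.sum_congr rfl fun i _ => ?_
          rw [real_inner_comm (f i) x]; ring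
      _ = ⟪x, ∑ i, ⟪f i, y⟫ • f i⟫ := by
          rw [inner_sum]
          exact Finset.sum_congr rfl fun i _ => (real_inner_smul_right _ _ _).symm
      _ = ⟪x, y⟫ := by rw [hf y]
  let V : EuclideanSpace ℝ (Fin n) →ₗᵢ[ℝ] EuclideanSpace ℝ (Fin k) :=
    V0.isometryOfInner hV
  set W : Submodule ℝ (EuclideanSpace ℝ (Fin k)) := LinearMap.range V0 with hWdef
  have hWdim : Module.finrank ℝ W = n := by
    have hinj : Function.Injective ⇑V0 := V.injective
    rw [hWdef, LinearMap.finrank_range_of_inj hinj]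
    exact finrank_euclideanSpace_fin
  have hOrthdim : Module.finrank ℝ Wᗮ = k - n := by
    have h := Submodule.finrank_add_finrank_orthogonal W
    rw [hWdim] at h
    have hk : Module.finrank ℝ (EuclideanSpace ℝ (Fin k)) = k := finrank_euclideanSpace_fin
    omega
  let U : EuclideanSpace ℝ (Fin (k - n)) ≃ₗᵢ[ℝ] Wᗮ :=
    (((stdOrthonormalBasis ℝ Wᗮ).reindex (finCongr hOrthdim)).repr).symm
  -- the dilation map
  let Φ0 : WithLp 2 (EuclideanSpace ℝ (Fin n) × EuclideanSpace ℝ (Fin (k - n)))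
      →ₗ[ℝ] EuclideanSpace ℝ (Fin k) :=
    (V0 ∘ₗ LinearMap.fst ℝ _ _
      + Wᗮ.subtype ∘ₗ (U.toLinearEquiv : EuclideanSpace ℝ (Fin (k - n)) →ₗ[ℝ] Wᗮ)
          ∘ₗ LinearMap.snd ℝ _ _)
      ∘ₗ (WithLp.linearEquiv 2 ℝ _).toLinearMap
  have hΦ0 : ∀ z, Φ0 z = V0 z.fst + (U z.snd : EuclideanSpace ℝ (Fin k)) := fun z => rfl
  have hΦinner : ∀ z w, ⟪Φ0 z, Φ0 w⟫ = ⟪z, w⟫ := by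
    intro z w
    rw [hΦ0, hΦ0, WithLp.prod_inner_apply]
    have hz1 : V0 z.fst ∈ W := ⟨z.fst, rfl⟩
    have hw1 : V0 w.fst ∈ W := ⟨w.fst, rfl⟩
    have hz2 : (U z.snd : EuclideanSpace ℝ (Fin k)) ∈ Wᗮ := (U z.snd).2
    have hw2 : (U w.snd : EuclideanSpace ℝ (Fin k)) ∈ Wᗮ := (U w.snd).2
    rw [inner_add_left, inner_add_right, inner_add_right,
      Submodule.inner_right_of_mem_orthogonal hz1 hw2,
      Submodule.inner_left_of_mem_orthogonal hw1 hz2, hV]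
    have hU : ⟪(U z.snd : EuclideanSpace ℝ (Fin k)), (U w.snd : EuclideanSpace ℝ (Fin k))⟫
        = ⟪z.snd, w.snd⟫ := by
      rw [← Submodule.coe_inner, U.inner_map_map]
    rw [hU]; simp only [WithLp.ofLp_fst, WithLp.ofLp_snd]; ring
  have hrank : Module.finrank ℝ
      (WithLp 2 (EuclideanSpace ℝ (Fin n) × EuclideanSpace ℝ (Fin (k - n))))
      = Module.finrank ℝ (EuclideanSpace ℝ (Fin k)) := by
    rw [(WithLp.linearEquiv 2 ℝ _).finrank_eq, Module.finrank_prod,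
      finrank_euclideanSpace_fin, finrank_euclideanSpace_fin, finrank_euclideanSpace_fin]
    omega
  let Φ := (Φ0.isometryOfInner hΦinner).toLinearIsometryEquiv hrank
  have hΦ : ∀ z, Φ z = V0 z.fst + (U z.snd : EuclideanSpace ℝ (Fin k)) := fun z => hΦ0 z
  let g : Fin k → EuclideanSpace ℝ (Fin (k - n)) :=
    fun i => (Φ.symm (EuclideanSpace.single i 1)).snd
  have hinner_symm : ∀ (u) (z), ⟪Φ.symm u, z⟫ = ⟪u, Φ z⟫ := by
    intro u z
    conv_rhs => rw [← Φ.apply_symm_apply u]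
    rw [Φ.inner_map_map]
  have key1 : ∀ i, (Φ.symm (EuclideanSpace.single i 1)).fst = f i := by
    intro i
    apply ext_inner_right ℝ
    intro x
    have h1 : ⟪Φ.symm (EuclideanSpace.single i 1),
        ((WithLp.equiv 2 _).symm (x, 0) : WithLp 2 (EuclideanSpace ℝ (Fin n) ×
          EuclideanSpace ℝ (Fin (k - n))))⟫
        = ⟪(Φ.symm (EuclideanSpace.single i 1)).fst, x⟫ := by
      rw [WithLp.prod_inner_apply]
      simp
    rw [← h1, hinner_symm, hΦ]
    have h2 : ((WithLp.equiv 2 (EuclideanSpace ℝ (Fin n) ×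
        EuclideanSpace ℝ (Fin (k - n)))).symm (x, 0)).fst = x := rfl
    have h3 : ((WithLp.equiv 2 (EuclideanSpace ℝ (Fin n) ×
        EuclideanSpace ℝ (Fin (k - n)))).symm (x, 0)).snd = 0 := rfl
    rw [h2, h3, map_zero]
    simp only [Submodule.coe_zero, add_zero]
    rw [EuclideanSpace.inner_single_left]
    simp [hV0]
  have key : ∀ i, Φ.symm (EuclideanSpace.single i 1)
      = (WithLp.equiv 2 _).symm (f i, g i) := by
    intro i
    exact congrArg (WithLp.toLp 2) (Prod.ext (key1 i) rfl)
  refine ⟨g, ?_, (EuclideanSpace.basisFun (Fin k) ℝ).map Φ.symm, ?_⟩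
  · -- Parseval property of g
    intro y
    set z : WithLp 2 (EuclideanSpace ℝ (Fin n) × EuclideanSpace ℝ (Fin (k - n))) :=
      (WithLp.equiv 2 _).symm (0, y) with hz
    set b := (EuclideanSpace.basisFun (Fin k) ℝ).map Φ.symm with hb
    have hbi : ∀ i, b i = Φ.symm (EuclideanSpace.single i 1) := by
      intro i
      rw [hb, OrthonormalBasis.map_apply, EuclideanSpace.basisFun_apply]
    have hsum := b.sum_repr z
    have hrepr : ∀ i, b.repr z i = ⟪g i, y⟫ := by
      intro i
      rw [OrthonormalBasis.repr_apply_apply, hbi i, key i, hz, WithLp.prod_inner_apply]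
      have : ((WithLp.equiv 2 (EuclideanSpace ℝ (Fin n) ×
          EuclideanSpace ℝ (Fin (k - n)))).symm (f i, g i)).fst = f i := rfl
      simp
    let π : WithLp 2 (EuclideanSpace ℝ (Fin n) × EuclideanSpace ℝ (Fin (k - n)))
        →ₗ[ℝ] EuclideanSpace ℝ (Fin (k - n)) :=
      LinearMap.snd ℝ _ _ ∘ₗ (WithLp.linearEquiv 2 ℝ _).toLinearMap
    have hπ : ∀ z', π z' = z'.snd := fun _ => rfl
    have := congrArg π hsum
    rw [map_sum] at this
    have hterm : ∀ i, π (b.repr z i • b i) = ⟪g i, y⟫ • g i := by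
      intro i
      rw [map_smul, hπ, hrepr i, hbi i]
    rw [Finset.sum_congr rfl fun i _ => hterm i] at this
    rw [this, hπ, hz]
    rfl
  · -- the orthonormal basis property
    intro i
    rw [OrthonormalBasis.map_apply, EuclideanSpace.basisFun_apply]
    exact key i
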